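/- For every 0 < c < 1, Σ_{a ≤ N^c} N_a(T̃_{N,a}) = Σ_{a ≤ N^c} (φ(a)/a²)·(N−2a)²/2 + O(N^{1+c}), where T̃_{N,a} = {(x,y) : 0 < x ≤ N−2a, 0 < y ≤ N−2a−x} and N_a(Ω) counts integer points (x,y) in Ω with xy ≡ 1 (mod a). -/

import Mathlib

open scoped Nat

/-- `N_a(T̃_{N,a})`: the number of integer pairs `(x,y)` with `0 < x ≤ N − 2a`,
`0 < y ≤ N − 2a − x` and `xy ≡ 1 (mod a)`. -/
noncomputable def NaT (N a : ℕ) : ℕ :=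
  Nat.card {v : ℤ × ℤ // 0 < v.1 ∧ v.1 ≤ (N : ℤ) - 2 * a ∧
    0 < v.2 ∧ v.2 ≤ (N : ℤ) - 2 * a - v.1 ∧ v.1 * v.2 ≡ 1 [ZMOD (a : ℤ)]}

open Finset

section Aux

lemma ap_count (a L r : ℕ) (ha : 0 < a) (hr : r < a) :
    L / a ≤ ((Finset.Ioc 0 L).filter (fun y => y % a = r)).card ∧
    ((Finset.Ioc 0 L).filter (fun y => y % a = r)).card ≤ L / a + 1 := by
  classical
  obtain ⟨r', hr'1, hr'a, hr'mod⟩ : ∃ r', 1 ≤ r' ∧ r' ≤ a ∧ r' % a = r := by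
    rcases Nat.eq_zero_or_pos r with h | h
    · exact ⟨a, ha, le_refl a, by simp [Nat.mod_self, h]⟩
    · exact ⟨r, h, le_of_lt hr, Nat.mod_eq_of_lt hr⟩
  have hinj : Function.Injective (fun k => a * k + r') := by
    intro k m h
    simp only at h
    have : a * k = a * m := by omega
    exact Nat.eq_of_mul_eq_mul_left ha this
  constructor
  · have hsub : (Finset.range (L / a)).image (fun k => a * k + r') ⊆
        (Finset.Ioc 0 L).filter (fun y => y % a = r) := by
      intro y hy
      simp only [mem_image, mem_range] at hy
      obtain ⟨k, hk, rfl⟩ := hy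
      simp only [mem_filter, mem_Ioc]
      refine ⟨⟨by omega, ?_⟩, by rw [Nat.mul_add_mod]; exact hr'mod⟩
      have h1 : a * (k + 1) ≤ a * (L / a) := Nat.mul_le_mul_left a (by omega)
      have h2 : a * (L / a) ≤ L := Nat.mul_div_le L a
      have h3 : a * (k + 1) = a * k + a := by ring
      omega
    calc L / a = ((Finset.range (L / a)).image (fun k => a * k + r')).card := by
          rw [Finset.card_image_of_injective _ hinj, Finset.card_range]
      _ ≤ _ := Finset.card_le_card hsub
  · have hsub : (Finset.Ioc 0 L).filter (fun y => y % a = r) ⊆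
        (Finset.range (L / a + 1)).image (fun k => a * k + r') := by
      intro y hy
      simp only [mem_filter, mem_Ioc] at hy
      obtain ⟨⟨hy0, hyL⟩, hym⟩ := hy
      obtain ⟨q, hq⟩ : ∃ q, y = a * q + r := by
        refine ⟨y / a, ?_⟩
        have h := Nat.div_add_mod y a
        omega
      obtain ⟨k, hk⟩ : ∃ k, y = a * k + r' := by
        rcases Nat.eq_zero_or_pos r with h0 | h0
        · have hra : r' = a := by
            have hd : a ∣ r' := Nat.dvd_of_mod_eq_zero (by omega)
            exact Nat.le_antisymm hr'a (Nat.le_of_dvd (by omega) hd)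
          have hq1 : 1 ≤ q := by
            by_contra h
            have hq0 : q = 0 := by omega
            have : a * q = 0 := by rw [hq0, Nat.mul_zero]
            omega
          refine ⟨q - 1, ?_⟩
          have h4 : a * (q - 1) + a = a * q := by
            have h5 : a * (q - 1) + a = a * (q - 1 + 1) := by ring
            rw [h5, Nat.sub_add_cancel hq1]
          omega
        · have hlt : r' < a := by
            rcases Nat.lt_or_ge r' a with h | h
            · exact h
            · exfalso
              have he : r' = a := le_antisymm hr'a h
              rw [he, Nat.mod_self] at hr'mod
              omega
          have hrr : r' = r := by rw [← hr'mod]; exact (Nat.mod_eq_of_lt hlt).symm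
          exact ⟨q, by omega⟩
      simp only [mem_image, mem_range]
      refine ⟨k, ?_, hk.symm⟩
      have hak : a * k + 1 ≤ L := by omega
      have h5 : k ≤ L / a := (Nat.le_div_iff_mul_le ha).2
        (by have : k * a = a * k := Nat.mul_comm k a; omega)
      omega
    calc ((Finset.Ioc 0 L).filter (fun y => y % a = r)).card
        ≤ ((Finset.range (L / a + 1)).image (fun k => a * k + r')).card :=
          Finset.card_le_card hsub
      _ ≤ L / a + 1 := le_trans Finset.card_image_le (by simp)

/-- row count when coprime -/
lemma cnt_bounds (a x L : ℕ) (ha : 0 < a) (hco : Nat.Coprime x a) :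
    L / a ≤ ((Finset.Ioc 0 L).filter (fun y => (x * y) % a = 1 % a)).card ∧
    ((Finset.Ioc 0 L).filter (fun y => (x * y) % a = 1 % a)).card ≤ L / a + 1 := by
  rcases Nat.lt_or_ge a 2 with h2 | h2
  · -- a = 1 : condition trivially true
    have ha1 : a = 1 := by omega
    subst ha1
    rw [Finset.filter_true_of_mem (fun y _ => by simp [Nat.mod_one])]
    simp [Nat.card_Ioc, Nat.div_one]
  · obtain ⟨x', -, hx'⟩ := Nat.exists_mul_mod_eq_one_of_coprime hco h2
    have h1a : 1 % a = 1 := Nat.mod_eq_of_lt (by omega)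
    have hme : (x * x') % a = 1 % a := by rw [hx', h1a]
    have key : ∀ y, ((x * y) % a = 1 % a) ↔ (y % a = x' % a) := by
      intro y
      constructor
      · intro h
        have h1 : (x * x') % a = 1 % a := hme
        -- y ≡ (x*x')*y ≡ x'*(x*y) ≡ x'*1 = x' [MOD a]
        have e1 : (x * x' * y) % a = (1 * y) % a := Nat.ModEq.mul_right y h1
        have e2 : (x' * (x * y)) % a = (x' * 1) % a := Nat.ModEq.mul_left x' h
        calc y % a = (1 * y) % a := by rw [one_mul]
          _ = (x * x' * y) % a := e1.symm
          _ = (x' * (x * y)) % a := by congr 1; ring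
          _ = (x' * 1) % a := e2
          _ = x' % a := by rw [mul_one]
      · intro h
        have e2 : (x * y) % a = (x * x') % a := Nat.ModEq.mul_left x h
        rw [e2, hme]
    have hfe : (Finset.Ioc 0 L).filter (fun y => (x * y) % a = 1 % a)
        = (Finset.Ioc 0 L).filter (fun y => y % a = x' % a) := by
      apply Finset.filter_congr
      intro y _
      simp [key y]
    rw [hfe]
    exact ap_count a L (x' % a) ha (Nat.mod_lt x' ha)

/-- row count when not coprime: empty -/
lemma cnt_zero (a x L : ℕ) (hco : ¬ Nat.Coprime x a) :
    ((Finset.Ioc 0 L).filter (fun y => (x * y) % a = 1 % a)).card = 0 := by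
  rw [Finset.card_eq_zero, Finset.filter_eq_empty_iff]
  intro y _ h
  apply hco
  have hme : Nat.ModEq a (x * y) 1 := h
  have hdvd : (a : ℤ) ∣ 1 - (x * y : ℕ) := Nat.ModEq.dvd hme
  have hg : ((Nat.gcd x a : ℕ) : ℤ) ∣ 1 := by
    have h1 : ((Nat.gcd x a : ℕ) : ℤ) ∣ (a : ℤ) := Int.natCast_dvd_natCast.2 (Nat.gcd_dvd_right x a)
    have h2 : ((Nat.gcd x a : ℕ) : ℤ) ∣ ((x * y : ℕ) : ℤ) :=
      Int.natCast_dvd_natCast.2 (dvd_mul_of_dvd_left (Nat.gcd_dvd_left x a) y)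
    have h3 : ((Nat.gcd x a : ℕ) : ℤ) ∣ (1 - (x * y : ℕ) : ℤ) := dvd_trans h1 hdvd
    have := dvd_add h3 h2
    simpa using this
  have : Nat.gcd x a ∣ 1 := by exact_mod_cast hg
  exact Nat.dvd_one.mp this

lemma blocks (a : ℕ) : ∀ q : ℕ,
    ((Finset.Ioc 0 (a * q)).filter (fun x => a.Coprime x)).card = q * a.totient := by
  intro q
  induction q with
  | zero => simp
  | succ q ih =>
    have hsplit : Finset.Ioc 0 (a * (q + 1)) = Finset.Ioc 0 (a * q) ∪ Finset.Ioc (a * q) (a * (q + 1)) := by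
      rw [Finset.Ioc_union_Ioc_eq_Ioc (Nat.zero_le _) (Nat.mul_le_mul_left a (by omega))]
    have hdisj : Disjoint ((Finset.Ioc 0 (a * q)).filter (fun x => a.Coprime x))
        ((Finset.Ioc (a * q) (a * (q + 1))).filter (fun x => a.Coprime x)) := by
      rw [Finset.disjoint_left]
      intro z hz1 hz2
      simp only [Finset.mem_filter, Finset.mem_Ioc] at hz1 hz2
      omega
    have hblock : ((Finset.Ioc (a * q) (a * (q + 1))).filter (fun x => a.Coprime x)).card
        = a.totient := by
      have hIoc : Finset.Ioc (a * q) (a * (q + 1)) = Finset.Ico (a * q + 1) (a * q + 1 + a) := by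
        ext z
        simp only [Finset.mem_Ioc, Finset.mem_Ico]
        have : a * (q + 1) = a * q + a := by ring
        omega
      rw [hIoc]
      exact Nat.filter_coprime_Ico_eq_totient a (a * q + 1)
    rw [hsplit, Finset.filter_union, Finset.card_union_of_disjoint hdisj, ih, hblock]
    ring

/-- real-valued bound on the coprime counting function -/
lemma count_coprime_bound (a t : ℕ) (ha : 0 < a) :
    |(((Finset.Ioc 0 t).filter (fun x => a.Coprime x)).card : ℝ)
      - (a.totient : ℝ) * t / a| ≤ 2 * a := by
  have hqs := Nat.div_add_mod t a
  set q := t / a with hq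
  have hsplit : Finset.Ioc 0 t = Finset.Ioc 0 (a * q) ∪ Finset.Ioc (a * q) t := by
    rw [Finset.Ioc_union_Ioc_eq_Ioc (Nat.zero_le _) (by omega)]
  have hdisj : Disjoint ((Finset.Ioc 0 (a * q)).filter (fun x => a.Coprime x))
      ((Finset.Ioc (a * q) t).filter (fun x => a.Coprime x)) := by
    rw [Finset.disjoint_left]
    intro z hz1 hz2
    simp only [Finset.mem_filter, Finset.mem_Ioc] at hz1 hz2
    omega
  have hcard : ((Finset.Ioc 0 t).filter (fun x => a.Coprime x)).card
      = q * a.totient + ((Finset.Ioc (a * q) t).filter (fun x => a.Coprime x)).card := by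
    rw [hsplit, Finset.filter_union, Finset.card_union_of_disjoint hdisj, blocks]
  have hrem : ((Finset.Ioc (a * q) t).filter (fun x => a.Coprime x)).card ≤ t % a := by
    calc ((Finset.Ioc (a * q) t).filter (fun x => a.Coprime x)).card
        ≤ (Finset.Ioc (a * q) t).card := Finset.card_filter_le _ _
      _ = t - a * q := Nat.card_Ioc _ _
      _ = t % a := by omega
  have hmod : t % a < a := Nat.mod_lt t ha
  have hphi : a.totient ≤ a := Nat.totient_le a
  -- now real arithmetic
  rw [hcard]
  push_cast
  rw [abs_sub_le_iff]
  have haR : (0:ℝ) < a := by exact_mod_cast ha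
  have htR : (t:ℝ) = a * q + (t % a : ℕ) := by exact_mod_cast hqs.symm
  have hremR : (((Finset.Ioc (a * q) t).filter (fun x => a.Coprime x)).card : ℝ) ≤ (t % a : ℕ) := by
    exact_mod_cast hrem
  have hrem0 : (0:ℝ) ≤ (((Finset.Ioc (a * q) t).filter (fun x => a.Coprime x)).card : ℝ) := by positivity
  have hmodR : ((t % a : ℕ) : ℝ) < a := by exact_mod_cast hmod
  have hphiR : (a.totient : ℝ) ≤ a := by exact_mod_cast hphi
  have hphi0 : (0:ℝ) ≤ (a.totient : ℝ) := by positivity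
  have key : (a.totient : ℝ) * (t:ℝ) / a
      = (a.totient : ℝ) * q + (a.totient : ℝ) * ((t % a : ℕ) : ℝ) / a := by
    rw [htR]; field_simp
  have hb1 : (a.totient : ℝ) * ((t % a : ℕ) : ℝ) / a ≤ ((t % a : ℕ) : ℝ) := by
    rw [div_le_iff₀ haR]; nlinarith
  have hb0 : (0:ℝ) ≤ (a.totient : ℝ) * ((t % a : ℕ) : ℝ) / a := by positivity
  rw [key]
  constructor <;> linarith

lemma NaT_eq_sum (N a : ℕ) (ha : 0 < a) (hN : 2 * a < N) :
    NaT N a = ∑ x ∈ Finset.Ioc 0 (N - 2 * a),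
      ((Finset.Ioc 0 (N - 2 * a - x)).filter (fun y => (x * y) % a = 1 % a)).card := by
  classical
  set M : ℕ := N - 2 * a with hM
  have hMZ : ((M : ℤ)) = (N : ℤ) - 2 * a := by push_cast; omega
  -- step 1: Nat.card = card of integer finset
  set F : Finset (ℤ × ℤ) :=
    (Finset.Ioc (0:ℤ) (M:ℤ) ×ˢ Finset.Ioc (0:ℤ) (M:ℤ)).filter
      (fun v => v.2 ≤ (M:ℤ) - v.1 ∧ v.1 * v.2 ≡ 1 [ZMOD (a : ℤ)]) with hF
  have hset : {v : ℤ × ℤ | 0 < v.1 ∧ v.1 ≤ (N : ℤ) - 2 * a ∧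
      0 < v.2 ∧ v.2 ≤ (N : ℤ) - 2 * a - v.1 ∧ v.1 * v.2 ≡ 1 [ZMOD (a : ℤ)]} = (F : Set (ℤ × ℤ)) := by
    ext v
    simp only [Set.mem_setOf_eq, hF, Finset.coe_filter, Finset.mem_product, Finset.mem_Ioc,
      Set.mem_setOf_eq]
    rw [← hMZ]
    constructor
    · rintro ⟨h1, h2, h3, h4, h5⟩
      exact ⟨⟨⟨h1, h2⟩, h3, by linarith⟩, h4, h5⟩
    · rintro ⟨⟨⟨h1, h2⟩, h3, _⟩, h4, h5⟩
      exact ⟨h1, h2, h3, h4, h5⟩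
  have hstep1 : NaT N a = F.card := by
    rw [NaT]
    have : {v : ℤ × ℤ // 0 < v.1 ∧ v.1 ≤ (N : ℤ) - 2 * a ∧
        0 < v.2 ∧ v.2 ≤ (N : ℤ) - 2 * a - v.1 ∧ v.1 * v.2 ≡ 1 [ZMOD (a : ℤ)]}
        = {v : ℤ × ℤ // v ∈ {v : ℤ × ℤ | 0 < v.1 ∧ v.1 ≤ (N : ℤ) - 2 * a ∧
        0 < v.2 ∧ v.2 ≤ (N : ℤ) - 2 * a - v.1 ∧ v.1 * v.2 ≡ 1 [ZMOD (a : ℤ)]}} := rfl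
    rw [this, hset]
    rw [Nat.card_coe_set_eq, Set.ncard_coe_finset]
  -- step 2: integer finset to natural finset
  set G : Finset (ℕ × ℕ) :=
    (Finset.Ioc 0 M ×ˢ Finset.Ioc 0 M).filter
      (fun p => p.1 + p.2 ≤ M ∧ (p.1 * p.2) % a = 1 % a) with hG
  have hstep2 : F.card = G.card := by
    apply Finset.card_bij' (fun v _ => ((v.1.toNat, v.2.toNat) : ℕ × ℕ))
      (fun p _ => (((p.1 : ℤ), (p.2 : ℤ)) : ℤ × ℤ))
    · -- maps F into G
      intro v hv
      simp only [hF, Finset.mem_filter, Finset.mem_product, Finset.mem_Ioc] at hv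
      obtain ⟨⟨⟨h1, h2⟩, h3, h4⟩, h5, h6⟩ := hv
      simp only [hG, Finset.mem_filter, Finset.mem_product, Finset.mem_Ioc]
      refine ⟨⟨⟨by omega, by omega⟩, by omega, by omega⟩, by omega, ?_⟩
      have hv1 : ((v.1.toNat : ℤ)) = v.1 := Int.toNat_of_nonneg (by omega)
      have hv2 : ((v.2.toNat : ℤ)) = v.2 := Int.toNat_of_nonneg (by omega)
      have : ((v.1.toNat * v.2.toNat : ℕ) : ℤ) ≡ ((1 : ℕ) : ℤ) [ZMOD ((a:ℕ) : ℤ)] := by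
        push_cast
        rw [hv1, hv2]
        exact h6
      exact Int.natCast_modEq_iff.mp this
    · -- maps G into F
      intro p hp
      simp only [hG, Finset.mem_filter, Finset.mem_product, Finset.mem_Ioc] at hp
      obtain ⟨⟨⟨h1, h2⟩, h3, h4⟩, h5, h6⟩ := hp
      simp only [hF, Finset.mem_filter, Finset.mem_product, Finset.mem_Ioc]
      refine ⟨⟨⟨by exact_mod_cast h1, by exact_mod_cast h2⟩,
        by exact_mod_cast h3, by exact_mod_cast h4⟩, by push_cast; omega, ?_⟩
      have : ((p.1 * p.2 : ℕ) : ℤ) ≡ ((1 : ℕ) : ℤ) [ZMOD ((a:ℕ) : ℤ)] :=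
        Int.natCast_modEq_iff.mpr h6
      push_cast at this
      exact this
    · intro v hv
      simp only [hF, Finset.mem_filter, Finset.mem_product, Finset.mem_Ioc] at hv
      obtain ⟨⟨⟨h1, _⟩, h3, _⟩, _, _⟩ := hv
      ext <;> simp [Int.toNat_of_nonneg, le_of_lt h1, le_of_lt h3]
    · intro p hp
      ext <;> simp
  -- step 3: fiberwise count
  have hstep3 : G.card = ∑ x ∈ Finset.Ioc 0 M,
      ((Finset.Ioc 0 (M - x)).filter (fun y => (x * y) % a = 1 % a)).card := by
    rw [Finset.card_eq_sum_card_fiberwise (f := Prod.fst) (t := Finset.Ioc 0 M)]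
    · apply Finset.sum_congr rfl
      intro x hx
      simp only [Finset.mem_Ioc] at hx
      apply Finset.card_bij' (fun p _ => p.2) (fun y _ => ((x, y) : ℕ × ℕ))
      · intro p hp
        simp only [hG, Finset.mem_filter, Finset.mem_product, Finset.mem_Ioc] at hp
        obtain ⟨⟨⟨h1, h2⟩, h34⟩, h7⟩ := hp
        simp only [Finset.mem_filter, Finset.mem_Ioc]
        rw [← h7]
        exact ⟨⟨h2.1, by omega⟩, h34.2⟩
      · intro y hy
        simp only [Finset.mem_filter, Finset.mem_Ioc] at hy
        obtain ⟨⟨h1, h2⟩, h3⟩ := hy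
        simp only [hG, Finset.mem_filter, Finset.mem_product, Finset.mem_Ioc]
        refine ⟨⟨⟨⟨hx.1, hx.2⟩, h1, by omega⟩, by omega, h3⟩, ?_⟩
        trivial
      · intro p hp
        simp only [hG, Finset.mem_filter, Finset.mem_product, Finset.mem_Ioc] at hp
        rw [← hp.2]
      · intro y hy
        rfl
    · intro p hp
      simp only [hG, Finset.mem_coe, Finset.mem_filter, Finset.mem_product, Finset.mem_Ioc] at hp
      simp only [Finset.mem_coe, Finset.mem_Ioc]
      exact hp.1.1
  rw [hstep1, hstep2, hstep3]

lemma key_est (a M : ℕ) (ha : 0 < a) (hM : 0 < M) :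
    |((∑ x ∈ Finset.Ioc 0 M,
      ((Finset.Ioc 0 (M - x)).filter (fun y => (x * y) % a = 1 % a)).card : ℕ) : ℝ)
      - (a.totient : ℝ) / (a : ℝ) ^ 2 * (M : ℝ) ^ 2 / 2| ≤ 4 * (M : ℝ) := by
  classical
  have haR : (0:ℝ) < a := by exact_mod_cast ha
  set S : ℝ := ∑ x ∈ (Finset.Ioc 0 M).filter (fun x => a.Coprime x), ((M : ℝ) - x) with hS
  -- Step A
  have stepA : |((∑ x ∈ Finset.Ioc 0 M,
      ((Finset.Ioc 0 (M - x)).filter (fun y => (x * y) % a = 1 % a)).card : ℕ) : ℝ) - S / a|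
      ≤ (M : ℝ) := by
    have hSdiv : S / a = ∑ x ∈ Finset.Ioc 0 M,
        (if a.Coprime x then ((M : ℝ) - x) / a else 0) := by
      rw [hS, Finset.sum_filter, Finset.sum_div]
      apply Finset.sum_congr rfl
      intro x _
      split
      · rfl
      · simp
    have hcast : ((∑ x ∈ Finset.Ioc 0 M,
        ((Finset.Ioc 0 (M - x)).filter (fun y => (x * y) % a = 1 % a)).card : ℕ) : ℝ)
        = ∑ x ∈ Finset.Ioc 0 M,
          ((((Finset.Ioc 0 (M - x)).filter (fun y => (x * y) % a = 1 % a)).card : ℕ) : ℝ) := by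
      push_cast; rfl
    rw [hcast, hSdiv, ← Finset.sum_sub_distrib]
    calc |∑ x ∈ Finset.Ioc 0 M,
        (((((Finset.Ioc 0 (M - x)).filter (fun y => (x * y) % a = 1 % a)).card : ℕ) : ℝ)
          - (if a.Coprime x then ((M : ℝ) - x) / a else 0))|
        ≤ ∑ x ∈ Finset.Ioc 0 M,
          |((((Finset.Ioc 0 (M - x)).filter (fun y => (x * y) % a = 1 % a)).card : ℕ) : ℝ)
          - (if a.Coprime x then ((M : ℝ) - x) / a else 0)| := Finset.abs_sum_le_sum_abs _ _
      _ ≤ ∑ x ∈ Finset.Ioc 0 M, (1 : ℝ) := by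
          apply Finset.sum_le_sum
          intro x hx
          simp only [Finset.mem_Ioc] at hx
          by_cases hco : Nat.Coprime x a
          · rw [if_pos (Nat.coprime_comm.mp hco)]
            obtain ⟨hlo, hhi⟩ := cnt_bounds a x (M - x) ha hco
            set L : ℕ := M - x with hL
            have hLR : ((L : ℕ) : ℝ) = (M : ℝ) - x := by
              rw [hL]; push_cast [Nat.cast_sub hx.2]; ring
            have h1 : (((L / a : ℕ)) : ℝ) ≤ (L : ℝ) / a := Nat.cast_div_le
            have h2 : (L : ℝ) / a < (((L / a : ℕ)) : ℝ) + 1 := by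
              rw [div_lt_iff₀ haR]
              have hdm := Nat.div_add_mod L a
              have hmod : L % a < a := Nat.mod_lt L ha
              have : (L : ℝ) = (a : ℝ) * ((L / a : ℕ) : ℝ) + ((L % a : ℕ) : ℝ) := by
                exact_mod_cast hdm.symm
              have hmR : ((L % a : ℕ) : ℝ) < a := by exact_mod_cast hmod
              nlinarith
            have hloR : (((L / a : ℕ)) : ℝ) ≤
                ((((Finset.Ioc 0 L).filter (fun y => (x * y) % a = 1 % a)).card : ℕ) : ℝ) := by
              exact_mod_cast hlo
            have hhiR : ((((Finset.Ioc 0 L).filter (fun y => (x * y) % a = 1 % a)).card : ℕ) : ℝ)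
                ≤ (((L / a : ℕ)) : ℝ) + 1 := by exact_mod_cast hhi
            rw [← hLR]
            rw [abs_le]
            constructor <;> linarith
          · rw [if_neg (fun h => hco (Nat.coprime_comm.mp h))]
            rw [cnt_zero a x (M - x) hco]
            simp
      _ = (M : ℝ) := by rw [Finset.sum_const, Nat.card_Ioc]; simp
  -- Step B
  have stepB : S = ∑ t ∈ Finset.range M,
      ((((Finset.Ioc 0 t).filter (fun x => a.Coprime x)).card : ℕ) : ℝ) := by
    rw [hS]
    have hterm : ∀ x ∈ (Finset.Ioc 0 M).filter (fun x => a.Coprime x),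
        ((M : ℝ) - x) = ∑ t ∈ Finset.range M, (if x ≤ t then (1:ℝ) else 0) := by
      intro x hx
      simp only [Finset.mem_filter, Finset.mem_Ioc] at hx
      rw [Finset.sum_boole]
      have : (Finset.range M).filter (fun t => x ≤ t) = Finset.Ico x M := by
        ext t; simp only [Finset.mem_filter, Finset.mem_range, Finset.mem_Ico]; omega
      rw [this, Nat.card_Ico]
      push_cast [Nat.cast_sub hx.1.2]
      ring
    rw [Finset.sum_congr rfl hterm, Finset.sum_comm]
    apply Finset.sum_congr rfl
    intro t ht
    simp only [Finset.mem_range] at ht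
    rw [Finset.sum_boole]
    congr 1
    have : ((Finset.Ioc 0 M).filter (fun x => a.Coprime x)).filter (fun x => x ≤ t)
        = (Finset.Ioc 0 t).filter (fun x => a.Coprime x) := by
      ext z
      simp only [Finset.mem_filter, Finset.mem_Ioc]
      constructor
      · rintro ⟨⟨⟨h1, h2⟩, h3⟩, h4⟩; exact ⟨⟨h1, h4⟩, h3⟩
      · rintro ⟨⟨h1, h2⟩, h3⟩; exact ⟨⟨⟨h1, by omega⟩, h3⟩, h2⟩
    rw [Finset.filter_filter] at this ⊢
    exact_mod_cast congrArg Finset.card this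
  -- Step C
  have stepC : |S - (a.totient : ℝ) * (M : ℝ) ^ 2 / (2 * a)| ≤ 3 * (a : ℝ) * (M : ℝ) := by
    have hgauss : ∑ t ∈ Finset.range M, (t : ℝ) = (M : ℝ) * ((M : ℝ) - 1) / 2 := by
      have h := Finset.sum_range_id_mul_two M
      have h2 : ((∑ i ∈ Finset.range M, i) : ℝ) * 2 = (M : ℝ) * ((M : ℝ) - 1) := by
        have := congrArg (fun n : ℕ => (n : ℝ)) h
        push_cast [Nat.cast_sub hM] at this
        push_cast
        linarith [this]
      linarith
    have hmain : ∑ t ∈ Finset.range M, (a.totient : ℝ) * t / a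
        = (a.totient : ℝ) / a * ((M : ℝ) * ((M : ℝ) - 1) / 2) := by
      rw [← Finset.sum_div, ← Finset.mul_sum, hgauss]
      ring
    have h1 : |S - ∑ t ∈ Finset.range M, (a.totient : ℝ) * t / a| ≤ 2 * (a : ℝ) * (M : ℝ) := by
      rw [stepB, ← Finset.sum_sub_distrib]
      calc |∑ t ∈ Finset.range M,
          (((((Finset.Ioc 0 t).filter (fun x => a.Coprime x)).card : ℕ) : ℝ)
            - (a.totient : ℝ) * t / a)|
          ≤ ∑ t ∈ Finset.range M,
            |(((((Finset.Ioc 0 t).filter (fun x => a.Coprime x)).card : ℕ) : ℝ)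
            - (a.totient : ℝ) * t / a)| := Finset.abs_sum_le_sum_abs _ _
        _ ≤ ∑ t ∈ Finset.range M, (2 * (a:ℝ)) := by
            apply Finset.sum_le_sum
            intro t _
            exact count_coprime_bound a t ha
        _ = 2 * (a : ℝ) * (M : ℝ) := by rw [Finset.sum_const, Finset.card_range]; push_cast; ring
    have hphiR : (a.totient : ℝ) ≤ a := by exact_mod_cast Nat.totient_le a
    have hphi0 : (0:ℝ) ≤ (a.totient : ℝ) := by positivity
    have hM0 : (0:ℝ) < M := by exact_mod_cast hM
    have h2 : |(a.totient : ℝ) / a * ((M : ℝ) * ((M : ℝ) - 1) / 2)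
        - (a.totient : ℝ) * (M : ℝ) ^ 2 / (2 * a)| ≤ (a : ℝ) * (M : ℝ) := by
      have he : (a.totient : ℝ) / a * ((M : ℝ) * ((M : ℝ) - 1) / 2)
          - (a.totient : ℝ) * (M : ℝ) ^ 2 / (2 * a) = -((a.totient : ℝ) * M / (2 * a)) := by
        field_simp
        ring
      rw [he, abs_neg, abs_of_nonneg (by positivity)]
      rw [div_le_iff₀ (by positivity)]
      have haa : (1:ℝ) ≤ (a:ℝ) := by exact_mod_cast ha
      calc (a.totient : ℝ) * M ≤ (a:ℝ) * M := mul_le_mul_of_nonneg_right hphiR hM0.le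
        _ = (a:ℝ) * M * 1 := by ring
        _ ≤ (a:ℝ) * M * (2 * a) := by
            apply mul_le_mul_of_nonneg_left (by linarith) (by positivity)
        _ = (a:ℝ) * (M:ℝ) * (2 * (a:ℝ)) := by ring
    calc |S - (a.totient : ℝ) * (M : ℝ) ^ 2 / (2 * a)|
        ≤ |S - ∑ t ∈ Finset.range M, (a.totient : ℝ) * t / a|
          + |∑ t ∈ Finset.range M, (a.totient : ℝ) * t / a
            - (a.totient : ℝ) * (M : ℝ) ^ 2 / (2 * a)| := abs_sub_le _ _ _
      _ ≤ 2 * (a : ℝ) * (M : ℝ) + (a : ℝ) * (M : ℝ) := by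
          rw [hmain] at h1 ⊢
          exact add_le_add h1 h2
      _ = 3 * (a : ℝ) * (M : ℝ) := by ring
  -- combine
  have hfinal : (a.totient : ℝ) / (a : ℝ) ^ 2 * (M : ℝ) ^ 2 / 2
      = ((a.totient : ℝ) * (M : ℝ) ^ 2 / (2 * a)) / a := by
    rw [pow_two, div_mul_eq_mul_div, div_div, div_div]
    congr 1
    ring
  have hdiv : |S / a - (a.totient : ℝ) / (a : ℝ) ^ 2 * (M : ℝ) ^ 2 / 2| ≤ 3 * (M : ℝ) := by
    rw [hfinal]
    have hsd : S / (a:ℝ) - ((a.totient : ℝ) * (M : ℝ) ^ 2 / (2 * a)) / a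
        = (S - (a.totient : ℝ) * (M : ℝ) ^ 2 / (2 * a)) / a := by ring
    rw [hsd, abs_div, abs_of_pos haR, div_le_iff₀ haR]
    calc |S - (a.totient : ℝ) * (M : ℝ) ^ 2 / (2 * a)| ≤ 3 * (a : ℝ) * (M : ℝ) := stepC
      _ = 3 * (M : ℝ) * a := by ring
  calc |((∑ x ∈ Finset.Ioc 0 M,
      ((Finset.Ioc 0 (M - x)).filter (fun y => (x * y) % a = 1 % a)).card : ℕ) : ℝ)
      - (a.totient : ℝ) / (a : ℝ) ^ 2 * (M : ℝ) ^ 2 / 2|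
      ≤ |((∑ x ∈ Finset.Ioc 0 M,
        ((Finset.Ioc 0 (M - x)).filter (fun y => (x * y) % a = 1 % a)).card : ℕ) : ℝ) - S / a|
        + |S / a - (a.totient : ℝ) / (a : ℝ) ^ 2 * (M : ℝ) ^ 2 / 2| := abs_sub_le _ _ _
    _ ≤ (M : ℝ) + 3 * (M : ℝ) := add_le_add stepA hdiv
    _ = 4 * (M : ℝ) := by ring

lemma per_a (N a : ℕ) (ha : 0 < a) (hN : 2 * a < N) :
    |(NaT N a : ℝ) - (φ a : ℝ) / (a : ℝ) ^ 2 * ((N : ℝ) - 2 * a) ^ 2 / 2| ≤ 4 * (N : ℝ) := by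
  set M : ℕ := N - 2 * a with hM
  have hM0 : 0 < M := by omega
  have hMR : ((M : ℕ) : ℝ) = (N : ℝ) - 2 * a := by
    rw [hM]; push_cast [Nat.cast_sub (by omega : 2 * a ≤ N)]; ring
  have h := key_est a M ha hM0
  rw [NaT_eq_sum N a ha hN]
  rw [← hMR]
  calc |((∑ x ∈ Finset.Ioc 0 M,
      ((Finset.Ioc 0 (M - x)).filter (fun y => (x * y) % a = 1 % a)).card : ℕ) : ℝ)
      - (φ a : ℝ) / (a : ℝ) ^ 2 * ((M : ℝ)) ^ 2 / 2| ≤ 4 * (M : ℝ) := h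
    _ ≤ 4 * (N : ℝ) := by
        have : (M : ℝ) ≤ N := by rw [hMR]; push_cast; linarith [ha]
        linarith

end Aux

/-- Lemma 4.1: for `0 < c < 1`,
`Σ_{a ≤ N^c} N_a(T̃_{N,a}) = Σ_{a ≤ N^c} (φ(a)/a²)(N−2a)²/2 + O(N^{1+c})`
(the sum being over positive integers `a ≤ N^c` with `a < N/2`). -/
theorem stmt_14 (c : ℝ) (hc0 : 0 < c) (hc1 : c < 1) :
    ∃ C : ℝ, 0 < C ∧ ∀ N : ℕ, 1 ≤ N →
      |(∑ a ∈ (Finset.Ico 1 N).filter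
            (fun a : ℕ => (a : ℝ) ≤ (N : ℝ) ^ c ∧ 2 * a < N), (NaT N a : ℝ))
        - ∑ a ∈ (Finset.Ico 1 N).filter
            (fun a : ℕ => (a : ℝ) ≤ (N : ℝ) ^ c ∧ 2 * a < N),
            (φ a : ℝ) / (a : ℝ) ^ 2 * ((N : ℝ) - 2 * a) ^ 2 / 2|
        ≤ C * (N : ℝ) ^ ((1 : ℝ) + c) := by
  refine ⟨4, by norm_num, ?_⟩
  intro N hN
  classical
  set P : ℕ → Prop := fun a : ℕ => (a : ℝ) ≤ (N : ℝ) ^ c ∧ 2 * a < N with hP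
  set T : Finset ℕ := (Finset.Ico 1 N).filter (fun a : ℕ => (a : ℝ) ≤ (N : ℝ) ^ c ∧ 2 * a < N)
    with hT
  have hNR : (0:ℝ) < N := by exact_mod_cast hN
  have hrpow0 : (0:ℝ) ≤ (N : ℝ) ^ c := Real.rpow_nonneg (le_of_lt hNR) c
  -- cardinality bound
  have hcard : (T.card : ℝ) ≤ (N : ℝ) ^ c := by
    have hsub : T ⊆ Finset.Icc 1 (Nat.floor ((N : ℝ) ^ c)) := by
      intro a haT
      simp only [hT, Finset.mem_filter, Finset.mem_Ico] at haT
      simp only [Finset.mem_Icc]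
      exact ⟨haT.1.1, Nat.le_floor haT.2.1⟩
    calc (T.card : ℝ) ≤ ((Finset.Icc 1 (Nat.floor ((N : ℝ) ^ c))).card : ℝ) := by
          exact_mod_cast Finset.card_le_card hsub
      _ = (Nat.floor ((N : ℝ) ^ c) : ℝ) := by rw [Nat.card_Icc]; simp
      _ ≤ (N : ℝ) ^ c := Nat.floor_le hrpow0
  -- per-term bound
  have hterm : ∀ a ∈ T, |(NaT N a : ℝ)
      - (φ a : ℝ) / (a : ℝ) ^ 2 * ((N : ℝ) - 2 * a) ^ 2 / 2| ≤ 4 * (N : ℝ) := by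
    intro a haT
    simp only [hT, Finset.mem_filter, Finset.mem_Ico] at haT
    exact per_a N a (by omega) haT.2.2
  calc |(∑ a ∈ T, (NaT N a : ℝ)) - ∑ a ∈ T,
        (φ a : ℝ) / (a : ℝ) ^ 2 * ((N : ℝ) - 2 * a) ^ 2 / 2|
      = |∑ a ∈ T, ((NaT N a : ℝ)
        - (φ a : ℝ) / (a : ℝ) ^ 2 * ((N : ℝ) - 2 * a) ^ 2 / 2)| := by
        rw [Finset.sum_sub_distrib]
    _ ≤ ∑ a ∈ T, |(NaT N a : ℝ)
        - (φ a : ℝ) / (a : ℝ) ^ 2 * ((N : ℝ) - 2 * a) ^ 2 / 2| :=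
        Finset.abs_sum_le_sum_abs _ _
    _ ≤ ∑ a ∈ T, (4 * (N : ℝ)) := Finset.sum_le_sum hterm
    _ = (T.card : ℝ) * (4 * (N : ℝ)) := by rw [Finset.sum_const]; push_cast; ring
    _ ≤ (N : ℝ) ^ c * (4 * (N : ℝ)) := by
        apply mul_le_mul_of_nonneg_right hcard (by positivity)
    _ = 4 * ((N : ℝ) ^ (1:ℝ) * (N : ℝ) ^ c) := by rw [Real.rpow_one]; ring
    _ = 4 * (N : ℝ) ^ ((1:ℝ) + c) := by rw [← Real.rpow_add hNR]
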